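/- Every subset S of ℕ that is not syndetic is an interpolation set for strongly mixing systems: for every bounded function f : S → ℂ there exists a strongly mixing topological dynamical system (X,T), a transitive point x ∈ X, and a continuous function F : X → ℂ such that F(Tⁿx) = f(n) for all n ∈ S. -/

import Mathlib

/-- Every non-syndetic `S ⊆ ℕ` is an interpolation set for strongly mixing
systems: every bounded `f : S → ℂ` extends to a sequence `n ↦ F(Tⁿx)` with `(X,T)` a
strongly mixing system on a compact metric space, `x` a transitive point and `F` continuous. -/
theorem stmt8 (S : Set ℕ)
    (hS : ∀ n : ℕ, ∃ m : ℕ, 0 < m ∧ ∀ i < n, m + i ∉ S)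
    (f : ℕ → ℂ) (hf : ∃ C : ℝ, ∀ n ∈ S, ‖f n‖ ≤ C) :
    ∃ (X : Type) (_ : MetricSpace X) (_ : CompactSpace X) (T : X → X),
      Continuous T ∧
      (∀ U V : Set X, IsOpen U → IsOpen V → U.Nonempty → V.Nonempty →
        {n : ℕ | ((fun y => T^[n] y) ⁻¹' U ∩ V).Nonempty} ∈ Filter.cofinite) ∧
      ∃ (x : X) (F : X → ℂ),
        Dense (Set.range fun n : ℕ => T^[n] x) ∧ Continuous F ∧
        ∀ n ∈ S, F (T^[n] x) = f n := by
  classical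
  obtain ⟨C, hC⟩ := hf
  set C' : ℝ := max C 0 with hC'def
  -- the compact alphabet
  set K : Set ℂ := Metric.closedBall (0 : ℂ) C' with hKdef
  haveI : CompactSpace K := isCompact_iff_compactSpace.mp (isCompact_closedBall 0 C')
  have hK0 : (0 : ℂ) ∈ K := Metric.mem_closedBall_self (le_max_right _ _)
  haveI : Nonempty K := ⟨⟨0, hK0⟩⟩
  -- the product space with the shift
  letI : MetricSpace (ℕ → K) := TopologicalSpace.metrizableSpaceMetric (ℕ → K)
  set T : (ℕ → K) → (ℕ → K) := fun z i => z (i + 1) with hTdef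
  have hTcont : Continuous T := continuous_pi fun i => continuous_apply (i + 1)
  have hiter : ∀ (n : ℕ) (z : ℕ → K) (i : ℕ), T^[n] z i = z (i + n) := by
    intro n
    induction n with
    | zero => intro z i; simp
    | succ n ih =>
      intro z i
      rw [Function.iterate_succ_apply, ih]
      show z (i + n + 1) = z (i + (n + 1))
      ring_nf
  -- strong mixing
  have hmix : ∀ U V : Set (ℕ → K), IsOpen U → IsOpen V → U.Nonempty → V.Nonempty →
      {n : ℕ | ((fun y => T^[n] y) ⁻¹' U ∩ V).Nonempty} ∈ Filter.cofinite := by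
    intro U V hU hV ⟨u, hu⟩ ⟨v, hv⟩
    obtain ⟨IU, oU, hoU, hsubU⟩ := isOpen_pi_iff.mp hU u hu
    obtain ⟨IV, oV, hoV, hsubV⟩ := isOpen_pi_iff.mp hV v hv
    rw [Filter.mem_cofinite]
    apply Set.Finite.subset (Set.finite_Iio (max (IU.sup id + 1) (IV.sup id + 1)))
    intro n hn
    rw [Set.mem_Iio]
    by_contra hge
    push_neg at hge
    apply hn
    refine ⟨fun i => if h : i < n then v i else u (i - n), ?_, ?_⟩
    · show T^[n] _ ∈ U
      apply hsubU
      intro i hi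
      rw [hiter]
      have h1 : ¬ (i + n < n) := by omega
      simp only [h1, dif_neg, not_false_iff]
      have h2 : i + n - n = i := by omega
      rw [h2]
      exact (hoU i hi).2
    · apply hsubV
      intro i hi
      have hi' : i ≤ IV.sup id := Finset.le_sup (f := id) hi
      have h1 : i < n := by omega
      simp only [h1, dif_pos]
      exact (hoV i hi).2
  -- the clamped function with values in K
  set g : ℕ → K := fun n =>
    if h : ‖f n‖ ≤ C' then ⟨f n, by
      simpa [hKdef, Metric.mem_closedBall, Complex.dist_eq] using h⟩
    else ⟨0, hK0⟩ with hgdef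
  have hgS : ∀ n ∈ S, (g n : ℂ) = f n := by
    intro n hn
    have : ‖f n‖ ≤ C' := le_trans (hC n hn) (le_max_left _ _)
    simp [hgdef, this]
  -- arbitrarily far gaps of arbitrary length
  have hS2 : ∀ B L : ℕ, ∃ m : ℕ, B ≤ m ∧ ∀ i < L, m + i ∉ S := by
    intro B L
    obtain ⟨m, hm0, hm⟩ := hS (B + L)
    refine ⟨m + B, by omega, ?_⟩
    intro i hi
    have := hm (B + i) (by omega)
    have he : m + B + i = m + (B + i) := by omega
    rw [he]
    exact this
  choose gap hgap1 hgap2 using hS2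
  -- dense sequence in the product space
  set y : ℕ → (ℕ → K) := TopologicalSpace.denseSeq (ℕ → K) with hydef
  have hy : DenseRange y := TopologicalSpace.denseRange_denseSeq (ℕ → K)
  -- lengths and indices of words to embed
  set len : ℕ → ℕ := fun j => (Nat.unpair j).2 with hlendef
  set idx : ℕ → ℕ := fun j => (Nat.unpair j).1 with hidxdef
  -- positions of the embeddings
  set pos : ℕ → ℕ := fun j =>
    Nat.rec (gap 0 (len 0)) (fun j ih => gap (ih + len j) (len (j + 1))) j with hposdef
  have hpos0 : pos 0 = gap 0 (len 0) := rfl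
  have hposS : ∀ j, pos (j + 1) = gap (pos j + len j) (len (j + 1)) := fun j => rfl
  have hposgap : ∀ j, ∀ i < len j, pos j + i ∉ S := by
    intro j
    cases j with
    | zero => exact fun i hi => hgap2 0 (len 0) i hi
    | succ j => exact fun i hi => hgap2 (pos j + len j) (len (j + 1)) i hi
  have hposmono : ∀ j, pos j + len j ≤ pos (j + 1) := by
    intro j
    rw [hposS]
    exact hgap1 _ _
  have hposlt : ∀ j l, j < l → pos j + len j ≤ pos l := by
    intro j l hjl
    induction l with
    | zero => omega
    | succ l ih =>
      rcases Nat.lt_succ_iff_lt_or_eq.mp hjl with h | h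
      · exact le_trans (le_trans (ih h) (Nat.le_add_right _ _)) (hposmono l)
      · subst h; exact hposmono j
  -- the transitive point
  set x : ℕ → K := fun n =>
    if h : ∃ j, pos j ≤ n ∧ n < pos j + len j then
      y (idx (Nat.find h)) (n - pos (Nat.find h))
    else g n with hxdef
  -- x equals g on S
  have hxS : ∀ n ∈ S, x n = g n := by
    intro n hn
    have hno : ¬ ∃ j, pos j ≤ n ∧ n < pos j + len j := by
      rintro ⟨j, h1, h2⟩
      have : pos j + (n - pos j) ∉ S := hposgap j (n - pos j) (by omega)
      apply this
      have : pos j + (n - pos j) = n := by omega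
      rw [this]; exact hn
    simp [hxdef, hno]
  -- each word appears in x
  have hword : ∀ j, ∀ i < len j, x (pos j + i) = y (idx j) i := by
    intro j i hi
    have hex : ∃ l, pos l ≤ pos j + i ∧ pos j + i < pos l + len l :=
      ⟨j, by omega, by omega⟩
    have hfind : Nat.find hex = j := by
      have hspec := Nat.find_spec hex
      by_contra hne
      rcases Nat.lt_or_ge (Nat.find hex) j with h | h
      · have := hposlt (Nat.find hex) j h
        omega
      · have hj : j < Nat.find hex := by omega
        have := hposlt j (Nat.find hex) hj
        omega
    simp only [hxdef, dif_pos hex, hfind]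
    congr 1
    omega
  -- density of the orbit
  have hdense : Dense (Set.range fun n : ℕ => T^[n] x) := by
    rw [dense_iff_inter_open]
    intro U hU hUne
    obtain ⟨k, hk⟩ := hy.exists_mem_open hU hUne
    obtain ⟨I, o, ho, hsub⟩ := isOpen_pi_iff.mp hU (y k) hk
    set N : ℕ := I.sup id + 1 with hNdef
    set j : ℕ := Nat.pair k N with hjdef
    have hlenj : len j = N := by simp [hlendef, hjdef]
    have hidxj : idx j = k := by simp [hidxdef, hjdef]
    refine ⟨T^[pos j] x, ?_, ⟨pos j, rfl⟩⟩
    apply hsub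
    intro i hi
    have hiN : i < N := by
      have : i ≤ I.sup id := Finset.le_sup (f := id) hi
      omega
    have : T^[pos j] x i = y k i := by
      rw [hiter]
      have he : i + pos j = pos j + i := by omega
      rw [he, hword j i (by rw [hlenj]; exact hiN), hidxj]
    rw [this]
    exact (ho i hi).2
  -- assemble
  refine ⟨ℕ → K, inferInstance, inferInstance, T, hTcont, hmix, x,
    fun z => (z 0 : ℂ), hdense, ?_, ?_⟩
  · exact continuous_subtype_val.comp (continuous_apply 0)
  · intro n hn
    show ((T^[n] x 0 : K) : ℂ) = f n
    rw [hiter]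
    have : (0 : ℕ) + n = n := by omega
    rw [this, hxS n hn, hgS n hn]
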